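/- arXiv:1012.2998 — 4 statements merged into one kernel-verified Lean document; each statement's English description precedes it below -/
import Mathlib

section
/- Let A be an n×n nonnegative real matrix. Then ρ(A) ≥ 1 if and only if there exists a nonnegative vector x with x ≠ 0 and A x ≥ x componentwise. -/
open Matrix Filter

attribute [local instance] Matrix.linftyOpNormedRing Matrix.linftyOpNormedAlgebra

noncomputable local instance matCS {n : ℕ} : CompleteSpace (Matrix (Fin n) (Fin n) ℂ) :=
  FiniteDimensional.complete ℂ (Matrix (Fin n) (Fin n) ℂ)

private lemma rpow_one_div_tendsto (c : NNReal) (hc : c ≠ 0) :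
    Tendsto (fun k : ℕ => (c : ENNReal) ^ (1 / (k:ℝ))) atTop (nhds 1) := by
  have h1 : Tendsto (fun k : ℕ => ((c:ℝ) ^ (1 / (k:ℝ)))) atTop (nhds 1) := by
    have hcpos : (0:ℝ) < c := by exact_mod_cast hc.bot_lt
    have : Tendsto (fun k : ℕ => Real.log c * (1 / (k:ℝ))) atTop (nhds 0) := by
      simpa using (tendsto_const_nhds (x := Real.log c)).mul tendsto_one_div_atTop_nhds_zero_nat
    have := (Real.continuous_exp.tendsto 0).comp this
    simpa [Real.rpow_def_of_pos hcpos, Function.comp_def] using this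
  have h2 : Tendsto (fun k : ℕ => (c ^ (1 / (k:ℝ)) : NNReal)) atTop (nhds 1) := by
    rw [← NNReal.tendsto_coe] at *
    simpa [NNReal.coe_rpow] using h1
  have := (ENNReal.tendsto_coe (f := atTop)).mpr h2
  simpa [ENNReal.coe_rpow_of_ne_zero hc] using this

/-- For a nonnegative square real matrix `A`, the spectral radius satisfies `ρ(A) ≥ 1`
iff there is a nonnegative nonzero vector `x` with `A x ≥ x` componentwise. -/
theorem stmt2 {n : ℕ} (A : Matrix (Fin n) (Fin n) ℝ) (hA : ∀ i j, 0 ≤ A i j) :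
    1 ≤ spectralRadius ℂ (A.map Complex.ofReal) ↔
      ∃ x : Fin n → ℝ, (∀ i, 0 ≤ x i) ∧ x ≠ 0 ∧ ∀ i, x i ≤ A.mulVec x i := by
  set B := A.map Complex.ofReal with hB
  constructor
  · intro h
    -- spectrum is nonempty and finite
    have hσfin : (spectrum ℂ B).Finite := Matrix.finite_spectrum B
    have hσne : (spectrum ℂ B).Nonempty := by
      by_contra hne
      rw [Set.not_nonempty_iff_eq_empty] at hne
      rw [spectralRadius] at h
      simp [hne] at h
    obtain ⟨μ, hμσ, hμmax⟩ := Set.exists_max_image (spectrum ℂ B) (fun z => ‖z‖₊) hσfin hσne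
    have hμ1 : (1:ℝ) ≤ ‖μ‖ := by
      have : spectralRadius ℂ B ≤ (‖μ‖₊ : ENNReal) := by
        rw [spectralRadius]
        exact iSup₂_le fun a ha => by exact_mod_cast hμmax a ha
      have h1 : (1 : ENNReal) ≤ (‖μ‖₊ : ENNReal) := le_trans h this
      exact_mod_cast h1
    -- eigenvector for μ
    have hnu : ¬ IsUnit (algebraMap ℂ (Matrix (Fin n) (Fin n) ℂ) μ - B) :=
      spectrum.mem_iff.mp hμσ
    have hdet : (algebraMap ℂ (Matrix (Fin n) (Fin n) ℂ) μ - B).det = 0 := by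
      by_contra hd
      exact hnu ((Matrix.isUnit_iff_isUnit_det _).mpr (isUnit_iff_ne_zero.mpr hd))
    obtain ⟨v, hv0, hv⟩ := (Matrix.exists_mulVec_eq_zero_iff).mpr hdet
    have hEig : B.mulVec v = μ • v := by
      have := hv
      rw [Matrix.sub_mulVec] at this
      have h2 : (algebraMap ℂ (Matrix (Fin n) (Fin n) ℂ) μ).mulVec v = μ • v := by
        ext i
        simp [Matrix.algebraMap_eq_diagonal, Matrix.mulVec_diagonal]
      rw [h2] at this
      linear_combination (norm := module) -this
    refine ⟨fun i => ‖v i‖, fun i => norm_nonneg _, ?_, ?_⟩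
    · intro hx
      apply hv0
      ext i
      have := congrFun hx i
      simpa using this
    · intro i
      calc ‖v i‖ ≤ ‖μ‖ * ‖v i‖ := le_mul_of_one_le_left (norm_nonneg _) hμ1
        _ = ‖(μ • v) i‖ := by simp
        _ = ‖(B.mulVec v) i‖ := by rw [hEig]
        _ = ‖∑ j, (A i j : ℂ) * v j‖ := by
            simp [Matrix.mulVec, dotProduct, hB, Matrix.map_apply]
        _ ≤ ∑ j, ‖(A i j : ℂ) * v j‖ := norm_sum_le _ _
        _ = ∑ j, A i j * ‖v j‖ := by
            refine Finset.sum_congr rfl fun j _ => ?_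
            rw [norm_mul, Complex.norm_real, Real.norm_of_nonneg (hA i j)]
        _ = A.mulVec (fun i => ‖v i‖) i := rfl
  · rintro ⟨x, hx0, hxne, hxle⟩
    -- monotone iteration: x ≤ A^k x
    have mono : ∀ u w : Fin n → ℝ, (∀ i, u i ≤ w i) → ∀ i, A.mulVec u i ≤ A.mulVec w i := by
      intro u w huw i
      simp only [Matrix.mulVec, dotProduct]
      exact Finset.sum_le_sum fun j _ => mul_le_mul_of_nonneg_left (huw j) (hA i j)
    have iter : ∀ k : ℕ, ∀ i, x i ≤ (A ^ k).mulVec x i := by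
      intro k
      induction k with
      | zero => intro i; simp [Matrix.one_mulVec]
      | succ k ih =>
        intro i
        have h1 : (A ^ (k+1)).mulVec x = A.mulVec ((A ^ k).mulVec x) := by
          rw [pow_succ']
          rw [← Matrix.mulVec_mulVec]
        rw [h1]
        calc x i ≤ A.mulVec x i := hxle i
          _ ≤ A.mulVec ((A ^ k).mulVec x) i := mono _ _ ih i
    -- pick positive component
    obtain ⟨i₀, hi₀⟩ : ∃ i, x i ≠ 0 := by
      by_contra hc
      push_neg at hc
      exact hxne (funext hc)
    have hxi₀ : 0 < x i₀ := lt_of_le_of_ne (hx0 i₀) (Ne.symm hi₀)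
    set xc : Fin n → ℂ := fun i => (x i : ℂ) with hxc
    have hxcne : ‖xc‖₊ ≠ 0 := by
      simp only [nnnorm_ne_zero_iff]
      intro hz
      apply hi₀
      have := congrFun hz i₀
      simpa [hxc] using this
    -- key pointwise bound
    have hmapvec : ∀ M : Matrix (Fin n) (Fin n) ℝ,
        (M.map Complex.ofReal).mulVec xc = fun i => ((M.mulVec x i : ℝ) : ℂ) := by
      intro M
      ext i
      simp [Matrix.mulVec, dotProduct, hxc, Matrix.map_apply]
    have hpow : ∀ k : ℕ, B ^ k = (A ^ k).map Complex.ofReal := by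
      intro k
      exact
        (map_pow (Complex.ofRealHom.mapMatrix :
          Matrix (Fin n) (Fin n) ℝ →+* Matrix (Fin n) (Fin n) ℂ) A k).symm
    have key : ∀ k : ℕ, x i₀ ≤ ‖B ^ k‖ * ‖xc‖ := by
      intro k
      calc x i₀ ≤ (A ^ k).mulVec x i₀ := iter k i₀
        _ ≤ ‖(((A ^ k).mulVec x i₀ : ℝ) : ℂ)‖ := by
            rw [Complex.norm_real]; exact le_abs_self _
        _ = ‖((B ^ k).mulVec xc) i₀‖ := by rw [hpow k, hmapvec]
        _ ≤ ‖(B ^ k).mulVec xc‖ := norm_le_pi_norm _ i₀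
        _ ≤ ‖B ^ k‖ * ‖xc‖ := Matrix.linfty_opNorm_mulVec _ _
    set c : NNReal := (x i₀).toNNReal / ‖xc‖₊ with hc
    have hc0 : c ≠ 0 := by
      rw [hc]
      exact div_ne_zero (by simpa using hxi₀.le.lt_of_ne' (by simpa using hi₀)) hxcne
    have hkey' : ∀ k : ℕ, c ≤ ‖B ^ k‖₊ := by
      intro k
      rw [hc, div_le_iff₀ (hxcne.bot_lt)]
      have : x i₀ ≤ ‖B ^ k‖ * ‖xc‖ := key k
      rw [← NNReal.coe_le_coe]
      push_cast
      rw [Real.coe_toNNReal _ hxi₀.le]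
      exact this
    have gel := spectrum.pow_nnnorm_pow_one_div_tendsto_nhds_spectralRadius B
    have lim2 := rpow_one_div_tendsto c hc0
    have := le_of_tendsto_of_tendsto' lim2 gel
      (fun k => ENNReal.rpow_le_rpow (by exact_mod_cast hkey' k)
        (by positivity))
    exact this
end

section
/- Let d > 0, let ε ∈ (0, 1/d), and let u be a vector of positive reals. Suppose a sequence of nonnegative vectors (r_i) satisfies r_{i+1} ≥ (A − B(r_i))·r_i for nonnegative matrices satisfying A·u ≥ u and B(r)·u ≤ (max-component of r)·d·u for all r with 0 ≤ r ≤ 1, and r_0 ≥ ε·u with r_i ≤ ε·1 for all i. Then for every i ≥ 0 one has r_i ≥ (1 − εd)^i · ε · u. -/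
open Matrix

/-- Key induction lemma: if `r 0 ≥ ε·u`, each `r i ≤ ε` componentwise,
`r (i+1) ≥ (A - B(r i))·(r i)` with `A·u ≥ u`, `B(r)·u ≤ c·d·u` whenever `0 ≤ r ≤ c`,
and the matrices `A - B(r i)` are nonnegative, then `r i ≥ (1 - εd)^i·ε·u` for all `i`. -/
theorem stmt5 {n : ℕ} (u : Fin n → ℝ) (hu : ∀ j, 0 < u j)
    (d : ℝ) (hd : 0 < d) (ε : ℝ) (hε : 0 < ε) (hεd : ε < 1 / d)
    (A : Matrix (Fin n) (Fin n) ℝ) (hA : ∀ i j, 0 ≤ A i j)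
    (hAu : ∀ j, u j ≤ A.mulVec u j)
    (B : (Fin n → ℝ) → Matrix (Fin n) (Fin n) ℝ)
    (hBnn : ∀ x : Fin n → ℝ, (∀ j, 0 ≤ x j) → ∀ i j, 0 ≤ B x i j)
    (hB : ∀ (x : Fin n → ℝ) (c : ℝ), 0 ≤ c → (∀ j, 0 ≤ x j) → (∀ j, x j ≤ c) →
          ∀ j, (B x).mulVec u j ≤ c * d * u j)
    (r : ℕ → Fin n → ℝ) (hr : ∀ i j, 0 ≤ r i j)
    (hrec : ∀ i j, (A - B (r i)).mulVec (r i) j ≤ r (i + 1) j)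
    (hABnn : ∀ i j k, 0 ≤ (A - B (r i)) j k)
    (hr0 : ∀ j, ε * u j ≤ r 0 j)
    (hrb : ∀ i j, r i j ≤ ε) :
    ∀ i j, (1 - ε * d) ^ i * ε * u j ≤ r i j := by

  have hεd1 : ε * d < 1 := by
    have := (lt_div_iff₀ hd).mp hεd
    linarith
  have h1 : 0 ≤ 1 - ε * d := by linarith
  intro i
  induction i with
  | zero => intro j; simpa using hr0 j
  | succ i ih =>
    intro j
    set c := (1 - ε * d) ^ i * ε with hc
    have hcnn : 0 ≤ c := mul_nonneg (pow_nonneg h1 i) hε.le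
    -- B(r i) u ≤ ε d u
    have hBu : ∀ k, (B (r i)).mulVec u k ≤ ε * d * u k :=
      hB (r i) ε hε.le (hr i) (hrb i)
    -- (A - B(r i)) (c u) ≥ c (1 - εd) u
    have key : ∀ k, c * (1 - ε * d) * u k ≤ (A - B (r i)).mulVec (c • u) k := by
      intro k
      have : (A - B (r i)).mulVec (c • u) k = c * ((A.mulVec u) k - (B (r i)).mulVec u k) := by
        simp [Matrix.sub_mulVec, Matrix.mulVec_smul, Pi.smul_apply, smul_eq_mul, mul_sub]
      rw [this]
      have h2 : (1 - ε * d) * u k ≤ A.mulVec u k - (B (r i)).mulVec u k := by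
        have := hAu k
        have := hBu k
        nlinarith
      nlinarith
    have mono : ∀ k, (A - B (r i)).mulVec (c • u) k ≤ (A - B (r i)).mulVec (r i) k := by
      intro k
      unfold Matrix.mulVec dotProduct
      apply Finset.sum_le_sum
      intro m _
      exact mul_le_mul_of_nonneg_left (by simpa [Pi.smul_apply, smul_eq_mul] using ih m) (hABnn i k m)
    have := le_trans (le_trans (key j) (mono j)) (hrec i j)
    calc (1 - ε * d) ^ (i + 1) * ε * u j = c * (1 - ε * d) * u j := by ring
    _ ≤ r (i + 1) j := this
end

section
/- Let A be an n×n nonnegative real matrix that is strongly connected (irreducible) with ρ(A) ≥ 1. Then there exists a vector u with all components strictly positive such that A·u ≥ u componentwise. -/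
open Matrix

/-- If a nonnegative square real matrix `A` is strongly connected (irreducible) and its
spectral radius satisfies `ρ(A) ≥ 1`, then there is a strictly positive vector `u` with
`A u ≥ u` componentwise. -/
theorem stmt9 {n : ℕ} (A : Matrix (Fin n) (Fin n) ℝ) (hA : ∀ i j, 0 ≤ A i j)
    (hconn : ∀ i j, ∃ k, 1 ≤ k ∧ 0 < (A ^ k) i j)
    (hρ : 1 ≤ spectralRadius ℂ (A.map Complex.ofReal)) :
    ∃ u : Fin n → ℝ, (∀ i, 0 < u i) ∧ ∀ i, u i ≤ A.mulVec u i := by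
  set B : Matrix (Fin n) (Fin n) ℂ := A.map Complex.ofReal with hB
  -- n = 0 is impossible since the spectrum would be empty
  rcases Nat.eq_zero_or_pos n with hn | hn
  · subst hn
    have hsub : Subsingleton (Matrix (Fin 0) (Fin 0) ℂ) := by
      constructor; intro a b; ext i j; exact absurd i.2 (by omega)
    have hemp : spectrum ℂ B = ∅ := by
      ext z
      simp only [Set.mem_empty_iff_false, iff_false, spectrum.mem_iff, not_not]
      exact isUnit_of_subsingleton _
    rw [spectralRadius, hemp] at hρ
    simp at hρ
  -- pick an eigenvalue of maximal norm
  have hnontriv : Nontrivial (Fin n → ℂ) := by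
    have : Nonempty (Fin n) := ⟨⟨0, hn⟩⟩
    infer_instance
  have hne : (spectrum ℂ B).Nonempty := by
    obtain ⟨μ, hμ⟩ := Module.End.exists_eigenvalue (Matrix.toLinAlgEquiv' B : Module.End ℂ (Fin n → ℂ))
    exact ⟨μ, by
      have := Module.End.hasEigenvalue_iff_mem_spectrum.mp hμ
      rwa [AlgEquiv.spectrum_eq Matrix.toLinAlgEquiv' B] at this⟩
  obtain ⟨lam, hlam, hlammax⟩ := Set.exists_max_image (spectrum ℂ B) (fun z => ‖z‖₊)
    (Matrix.finite_spectrum B) hne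
  have hlamnorm : 1 ≤ ‖lam‖ := by
    have h1 : spectralRadius ℂ B ≤ (‖lam‖₊ : ENNReal) := by
      rw [spectralRadius]
      exact iSup₂_le fun z hz => by exact_mod_cast ENNReal.coe_le_coe.mpr (hlammax z hz)
    have h2 : (1 : ENNReal) ≤ (‖lam‖₊ : ENNReal) := le_trans hρ h1
    have h3 : (1 : NNReal) ≤ ‖lam‖₊ := by exact_mod_cast h2
    calc (1 : ℝ) ≤ ‖lam‖ := by exact_mod_cast h3
      _ = ‖lam‖ := rfl
  -- get an eigenvector
  have hlam' : lam ∈ spectrum ℂ (Matrix.toLinAlgEquiv' B) := by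
    rwa [AlgEquiv.spectrum_eq Matrix.toLinAlgEquiv' B]
  have heig : Module.End.HasEigenvalue (Matrix.toLinAlgEquiv' B : Module.End ℂ (Fin n → ℂ)) lam :=
    Module.End.HasEigenvalue.of_mem_spectrum hlam'
  obtain ⟨v, hv⟩ := heig.exists_hasEigenvector
  have hvne : v ≠ 0 := hv.right
  have hveq : B.mulVec v = lam • v := by
    have h := hv.apply_eq_smul
    rw [Matrix.toLinAlgEquiv'_apply] at h
    exact h
  -- the vector of absolute values
  set u0 : Fin n → ℝ := fun i => ‖v i‖ with hu0
  have hu0nonneg : ∀ i, 0 ≤ u0 i := fun i => norm_nonneg _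
  obtain ⟨j0, hj0⟩ : ∃ j0, v j0 ≠ 0 := Function.ne_iff.mp hvne
  have hj0pos : 0 < u0 j0 := by simpa [hu0] using norm_pos_iff.mpr hj0
  -- key inequality : u0 ≤ A u0
  have hkey : ∀ i, u0 i ≤ (A.mulVec u0) i := by
    intro i
    have h1 : ‖lam‖ * u0 i = ‖(B.mulVec v) i‖ := by
      rw [hveq]; simp [hu0]
    have h2 : ‖(B.mulVec v) i‖ ≤ (A.mulVec u0) i := by
      rw [Matrix.mulVec, Matrix.mulVec]
      refine le_trans (norm_sum_le _ _) ?_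
      apply le_of_eq
      refine Finset.sum_congr rfl fun j _ => ?_
      simp [hB, hu0, Matrix.map_apply, _root_.map_mul, Complex.norm_real, Real.norm_eq_abs, abs_of_nonneg (hA i j),
        dotProduct]
    calc u0 i = 1 * u0 i := (one_mul _).symm
      _ ≤ ‖lam‖ * u0 i := by
          exact mul_le_mul_of_nonneg_right hlamnorm (hu0nonneg i)
      _ ≤ (A.mulVec u0) i := h1 ▸ h2
  -- powers of A are nonnegative
  have hpow : ∀ m i j, 0 ≤ (A ^ m) i j := by
    intro m
    induction m with
    | zero => intro i j; by_cases h : i = j <;> simp [pow_zero, Matrix.one_apply, h]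
    | succ m ih =>
      intro i j
      rw [pow_succ, Matrix.mul_apply]
      exact Finset.sum_nonneg fun k _ => mul_nonneg (ih i k) (hA k j)
  -- mulVec monotonicity and iterated inequality
  have hmono : ∀ (x y : Fin n → ℝ), (∀ i, x i ≤ y i) → ∀ i, (A.mulVec x) i ≤ (A.mulVec y) i := by
    intro x y hxy i
    rw [Matrix.mulVec, Matrix.mulVec]
    exact Finset.sum_le_sum fun j _ => mul_le_mul_of_nonneg_left (hxy j) (hA i j)
  have hiter : ∀ m i, u0 i ≤ ((A ^ m).mulVec u0) i := by
    intro m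
    induction m with
    | zero => intro i; simp [pow_zero]
    | succ m ih =>
      intro i
      have : (A ^ (m + 1)).mulVec u0 = A.mulVec ((A ^ m).mulVec u0) := by
        rw [Matrix.mulVec_mulVec, ← pow_succ']
      rw [this]
      exact le_trans (hkey i) (hmono u0 _ ih i)
  -- choose powers hitting j0
  choose k hk1 hkpos using fun i => hconn i j0
  set N : ℕ := Finset.univ.sup k with hN
  have hkN : ∀ i, k i ≤ N := fun i => Finset.le_sup (Finset.mem_univ i)
  -- the positive vector
  set s : ℕ → Fin n → ℝ := fun m => (A ^ m).mulVec u0 with hs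
  set w : Fin n → ℝ := fun i => ∑ m ∈ Finset.range (N + 1), s m i with hw
  have hsnonneg : ∀ m i, 0 ≤ s m i := by
    intro m i
    simp only [hs, Matrix.mulVec, dotProduct]
    exact Finset.sum_nonneg fun j _ => mul_nonneg (hpow m i j) (hu0nonneg j)
  refine ⟨w, ?_, ?_⟩
  · -- positivity
    intro i
    apply Finset.sum_pos' (fun m _ => hsnonneg m i)
    refine ⟨k i, Finset.mem_range.mpr (Nat.lt_succ_of_le (hkN i)), ?_⟩
    have hterm : (A ^ k i) i j0 * u0 j0 ≤ s (k i) i := by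
      rw [hs]
      simp only [Matrix.mulVec, dotProduct]
      exact Finset.single_le_sum (fun j _ => mul_nonneg (hpow _ i j) (hu0nonneg j))
        (Finset.mem_univ j0)
    exact lt_of_lt_of_le (mul_pos (hkpos i) hj0pos) hterm
  · -- A w ≥ w
    intro i
    have hstep : ∀ m, A.mulVec (s m) = s (m + 1) := by
      intro m
      rw [hs]
      simp only
      rw [Matrix.mulVec_mulVec, ← pow_succ']
    have hAw : (A.mulVec w) i = ∑ m ∈ Finset.range (N + 1), s (m + 1) i := by
      calc (A.mulVec w) i = ∑ j, A i j * ∑ m ∈ Finset.range (N + 1), s m j := rfl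
        _ = ∑ j, ∑ m ∈ Finset.range (N + 1), A i j * s m j := by
            simp [Finset.mul_sum]
        _ = ∑ m ∈ Finset.range (N + 1), ∑ j, A i j * s m j := Finset.sum_comm
        _ = ∑ m ∈ Finset.range (N + 1), s (m + 1) i := by
            refine Finset.sum_congr rfl fun m _ => ?_
            rw [← hstep m]
            rfl
    have htel : ∑ m ∈ Finset.range (N + 1), (s (m + 1) i - s m i)
        = s (N + 1) i - s 0 i := Finset.sum_range_sub (fun m => s m i) (N + 1)
    have hs0 : s 0 i = u0 i := by simp [hs, pow_zero]
    have hfin : w i ≤ (A.mulVec w) i := by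
      rw [hAw, hw]
      simp only
      rw [Finset.sum_sub_distrib] at htel
      have h1 : u0 i ≤ s (N + 1) i := hiter (N + 1) i
      rw [hs0] at htel
      linarith
    exact hfin
end

section
/- Let A be an irreducible (strongly connected) nonnegative n×n matrix with ρ(A) ≥ 1 and let u > 0 satisfy A u ≥ u. Suppose positive reals (ε_n) with ε_n → 0, and vectors r^{(n)} with ε_n·u ≤ r^{(n)} ≤ ε_n·1 and r^{(n+i)} ≥ (1−ε_n d)^i ε_n u for all n ≥ n_0 and all i (for some d > 0 and n_0 with ε_{n_0} d < 1). Then ∑_{i=0}^∞ r^{(i)}_X = ∞ for every coordinate X. -/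
open Matrix Filter

/-- Key divergence step: for an irreducible nonnegative matrix `A` with `ρ(A) ≥ 1` and
`u > 0` with `A·u ≥ u`, if positive reals `ε m → 0` and nonnegative vectors `r m` satisfy
`ε m·u ≤ r m ≤ ε m·1` and `r (m+i) ≥ (1 - ε m·d)^i·ε m·u` for `m ≥ n₀`, then
`∑ᵢ (r i)_X = ∞` for every coordinate `X`. -/
theorem stmt18 {n : ℕ} (A : Matrix (Fin n) (Fin n) ℝ) (hA : ∀ i j, 0 ≤ A i j)
    (hconn : ∀ i j, ∃ k : ℕ, 1 ≤ k ∧ 0 < (A ^ k) i j)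
    (hρ : 1 ≤ spectralRadius ℂ (A.map Complex.ofReal))
    (u : Fin n → ℝ) (hu : ∀ i, 0 < u i) (hAu : ∀ i, u i ≤ A.mulVec u i)
    (d : ℝ) (hd : 0 < d)
    (ε : ℕ → ℝ) (hεpos : ∀ m, 0 < ε m) (hεmono : Antitone ε)
    (hεlim : Tendsto ε atTop (nhds 0))
    (n₀ : ℕ) (hn₀ : ∀ m ≥ n₀, ε m * d < 1)
    (r : ℕ → Fin n → ℝ) (hrnn : ∀ m X, 0 ≤ r m X)
    (hlow : ∀ m X, ε m * u X ≤ r m X) (hhigh : ∀ m X, r m X ≤ ε m)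
    (hgeo : ∀ m ≥ n₀, ∀ (i : ℕ) (X : Fin n),
      (1 - ε m * d) ^ i * ε m * u X ≤ r (m + i) X) :
    ∀ X : Fin n, ∑' i : ℕ, ENNReal.ofReal (r i X) = ⊤ := by
  intro X
  by_contra hne
  have htail : Tendsto (fun m => ∑' i, ENNReal.ofReal (r (i + m) X)) atTop (nhds 0) :=
    ENNReal.tendsto_sum_nat_add _ hne
  have hbound : ∀ m ≥ n₀, ENNReal.ofReal (u X / d) ≤ ∑' i, ENNReal.ofReal (r (i + m) X) := by
    intro m hm
    have hq1 : 0 < ε m * d := mul_pos (hεpos m) hd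
    have hq2 : ε m * d < 1 := hn₀ m hm
    have hsummable : Summable (fun i : ℕ => (1 - ε m * d) ^ i * (ε m * u X)) :=
      (summable_geometric_of_lt_one (by linarith) (by linarith)).mul_right _
    have hsum : ∑' i : ℕ, (1 - ε m * d) ^ i * (ε m * u X) = u X / d := by
      rw [tsum_mul_right, tsum_geometric_of_lt_one (by linarith) (by linarith)]
      have : (1 : ℝ) - (1 - ε m * d) = ε m * d := by ring
      rw [this]
      field_simp
      rw [div_eq_iff (hεpos m).ne']
      ring
    calc ENNReal.ofReal (u X / d)
        = ∑' i : ℕ, ENNReal.ofReal ((1 - ε m * d) ^ i * (ε m * u X)) := by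
          rw [← ENNReal.ofReal_tsum_of_nonneg (fun i =>
            mul_nonneg (pow_nonneg (by linarith) _)
              (mul_nonneg (hεpos m).le (hu X).le)) hsummable, hsum]
      _ ≤ ∑' i, ENNReal.ofReal (r (i + m) X) := by
          refine ENNReal.tsum_le_tsum fun i => ENNReal.ofReal_le_ofReal ?_
          have := hgeo m hm i X
          rw [add_comm]
          linarith [this]
  have hpos : (0 : ENNReal) < ENNReal.ofReal (u X / d) :=
    ENNReal.ofReal_pos.2 (div_pos (hu X) hd)
  have hev := htail.eventually_lt_const hpos
  rcases (hev.and (eventually_ge_atTop n₀)).exists with ⟨m, hlt, hm⟩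
  exact absurd (hbound m hm) (not_le.2 hlt)
end
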